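/- Let H be a self-adjoint operator on a Hilbert space and let φ be a vector in the continuous spectral subspace of H. Then (1/T) ∫_{-T}^{T} |⟨e^{-itH}φ, φ⟩|² dt → 0 as T → ∞. -/

import Mathlib

open Filter MeasureTheory


lemma bdd_integrable {α : Type*} {E : Type*} [NormedAddCommGroup E] [MeasurableSpace α]
    {ν : Measure α} [IsFiniteMeasure ν] {f : α → E} (hf : AEStronglyMeasurable f ν)
    {C : ℝ} (h : ∀ a, ‖f a‖ ≤ C) : Integrable f ν :=
  (integrable_const C).mono' hf (Filter.Eventually.of_forall h)

lemma exp_int (ν : Measure (ℝ × ℝ)) [IsFiniteMeasure ν] (t : ℝ) :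
    Integrable (fun p : ℝ × ℝ => Complex.exp (↑(t * (p.2 - p.1)) * Complex.I)) ν := by
  apply bdd_integrable
  · exact (Complex.continuous_exp.comp (by fun_prop)).aestronglyMeasurable
  · intro p
    rw [Complex.norm_exp_ofReal_mul_I]

lemma normsq_eq (μ : Measure ℝ) [IsFiniteMeasure μ] (t : ℝ) :
    ‖∫ l, Complex.exp (-(Complex.I * t * l)) ∂μ‖ ^ 2
      = ∫ p : ℝ × ℝ, Real.cos (t * (p.1 - p.2)) ∂(μ.prod μ) := by
  set z := ∫ l, Complex.exp (-(Complex.I * t * l)) ∂μ with hz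
  have h1 : (‖z‖ : ℝ) ^ 2 = (z * (starRingEnd ℂ) z).re := by
    rw [Complex.mul_conj]
    simp [Complex.sq_norm]
  have h2 : (starRingEnd ℂ) z = ∫ l, Complex.exp (Complex.I * t * l) ∂μ := by
    rw [hz, ← integral_conj]
    congr 1; funext l
    rw [← Complex.exp_conj]
    congr 1
    simp [Complex.conj_ofReal]
  have h3 : z * (starRingEnd ℂ) z
      = ∫ p : ℝ × ℝ, Complex.exp (↑(t * (p.2 - p.1)) * Complex.I) ∂(μ.prod μ) := by
    rw [h2, hz, ← integral_prod_mul]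
    congr 1; funext p
    rw [← Complex.exp_add]
    congr 1
    push_cast
    ring
  have h4 := integral_re (𝕜 := ℂ) (exp_int (μ.prod μ) t)
  simp only [RCLike.re_to_complex] at h4
  rw [h1, h3, ← h4]
  congr 1; funext p
  rw [Complex.exp_ofReal_mul_I_re]
  rw [show t * (p.2 - p.1) = -(t * (p.1 - p.2)) by ring, Real.cos_neg]

-- closed form for the time average
lemma cosint {s : ℝ} (hs : s ≠ 0) (T : ℝ) :
    ∫ t in (-T)..T, Real.cos (t * s) = (Real.sin (T * s) - Real.sin (-T * s)) / s := by
  rw [intervalIntegral.integral_comp_mul_right Real.cos hs, integral_cos]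
  simp [smul_eq_mul, div_eq_inv_mul]

-- the diagonal is null
lemma diag_null (μ : Measure ℝ) [SFinite μ] [NullSingletonClass μ] :
    (μ.prod μ) {p : ℝ × ℝ | p.1 = p.2} = 0 := by
  have hm : MeasurableSet {p : ℝ × ℝ | p.1 = p.2} :=
    (isClosed_eq continuous_fst continuous_snd).measurableSet
  rw [Measure.prod_apply hm]
  have : ∀ x : ℝ, μ (Prod.mk x ⁻¹' {p : ℝ × ℝ | p.1 = p.2}) = 0 := by
    intro x
    have : Prod.mk x ⁻¹' {p : ℝ × ℝ | p.1 = p.2} = {x} := by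
      ext y; simp [eq_comm]
    rw [this]; exact measure_singleton x
  simp [this]

/-- Wiener step of the RAGE theorem.
If `U t = e^{-itH}` is the unitary group of a self-adjoint operator `H` and `φ` lies in the
continuous spectral subspace of `H` — i.e. the scalar spectral measure `μ` of `φ`, which
represents `⟨e^{-itH}φ, φ⟩ = ∫ e^{-itλ} dμ(λ)`, has no atoms — then
`(1/T) ∫_{-T}^{T} |⟨e^{-itH}φ, φ⟩|² dt → 0` as `T → ∞`. -/
theorem wiener_rage {ℋ : Type*} [NormedAddCommGroup ℋ] [InnerProductSpace ℂ ℋ]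
    (U : ℝ → ℋ →L[ℂ] ℋ) (φ : ℋ) (μ : Measure ℝ)
    [IsFiniteMeasure μ] [NullSingletonClass μ]
    (hspec : ∀ t : ℝ,
      (inner ℂ (U t φ) φ : ℂ) = ∫ l, Complex.exp (-(Complex.I * t * l)) ∂μ) :
    Tendsto (fun T : ℝ => (1 / T) * ∫ t in (-T)..T, ‖(inner ℂ (U t φ) φ : ℂ)‖ ^ 2)
      atTop (nhds 0) := by
  set ν := μ.prod μ with hν
  set G : ℝ → ℝ × ℝ → ℝ :=
    fun T p => (1 / T) * ∫ t in (-T)..T, Real.cos (t * (p.1 - p.2)) with hG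
  -- eventual equality of the two averages
  have heq : (fun T : ℝ => (1 / T) * ∫ t in (-T)..T, ‖(inner ℂ (U t φ) φ : ℂ)‖ ^ 2)
      =ᶠ[atTop] fun T => ∫ p, G T p ∂ν := by
    filter_upwards [eventually_gt_atTop (0 : ℝ)] with T hT
    have hT' : (-T : ℝ) ≤ T := by linarith
    have hint : Integrable
        (Function.uncurry fun (t : ℝ) (p : ℝ × ℝ) => Real.cos (t * (p.1 - p.2)))
        ((volume.restrict (Set.Ioc (-T) T)).prod ν) := by
      apply bdd_integrable
      · exact (Real.continuous_cos.comp (by fun_prop)).aestronglyMeasurable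
      · intro a
        simpa [Function.uncurry] using Real.abs_cos_le_one _
    calc (1 / T) * ∫ t in (-T)..T, ‖(inner ℂ (U t φ) φ : ℂ)‖ ^ 2
        = (1 / T) * ∫ t in (-T)..T, ∫ p, Real.cos (t * (p.1 - p.2)) ∂ν := by
          simp_rw [hspec, normsq_eq]; rfl
      _ = (1 / T) * ∫ t in Set.Ioc (-T) T, ∫ p, Real.cos (t * (p.1 - p.2)) ∂ν := by
          rw [intervalIntegral.integral_of_le hT']
      _ = (1 / T) * ∫ p, (∫ t in Set.Ioc (-T) T, Real.cos (t * (p.1 - p.2))) ∂ν := by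
          rw [integral_integral_swap hint]
      _ = (1 / T) * ∫ p, (∫ t in (-T)..T, Real.cos (t * (p.1 - p.2))) ∂ν := by
          congr 1
          refine integral_congr_ae (Filter.Eventually.of_forall fun p => ?_)
          simp only [intervalIntegral.integral_of_le hT']
      _ = ∫ p, G T p ∂ν := by simp only [hG]; rw [integral_const_mul]
  rw [show (0 : ℝ) = ∫ _ : ℝ × ℝ, (0 : ℝ) ∂ν by simp]
  refine Tendsto.congr' heq.symm ?_
  apply tendsto_integral_filter_of_dominated_convergence (fun _ => (2 : ℝ))
  · -- measurability
    filter_upwards [eventually_gt_atTop (0 : ℝ)] with T hT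
    have hT' : (-T : ℝ) ≤ T := by linarith
    have hm : StronglyMeasurable fun p : ℝ × ℝ =>
        ∫ t, Real.cos (t * (p.1 - p.2)) ∂(volume.restrict (Set.Ioc (-T) T)) := by
      apply StronglyMeasurable.integral_prod_right'
        (f := fun q : (ℝ × ℝ) × ℝ => Real.cos (q.2 * (q.1.1 - q.1.2)))
      exact (Real.continuous_cos.comp (by fun_prop)).stronglyMeasurable
    have : G T = fun p => (1 / T) *
        ∫ t, Real.cos (t * (p.1 - p.2)) ∂(volume.restrict (Set.Ioc (-T) T)) := by
      funext p
      simp only [hG]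
      rw [intervalIntegral.integral_of_le hT']
    rw [this]
    exact (hm.const_mul _).aestronglyMeasurable
  · -- bound
    filter_upwards [eventually_ge_atTop (1 : ℝ)] with T hT
    refine Filter.Eventually.of_forall fun p => ?_
    have hT0 : (0 : ℝ) < T := by linarith
    have hb : ‖∫ t in (-T)..T, Real.cos (t * (p.1 - p.2))‖ ≤ 1 * |T - (-T)| := by
      apply intervalIntegral.norm_integral_le_of_norm_le_const
      intro x _
      simpa using Real.abs_cos_le_one _
    simp only [hG]
    have : ‖(1 / T) * ∫ t in (-T)..T, Real.cos (t * (p.1 - p.2))‖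
        = (1 / T) * ‖∫ t in (-T)..T, Real.cos (t * (p.1 - p.2))‖ := by
      rw [norm_mul, Real.norm_eq_abs (1 / T), abs_of_pos (by positivity)]
    rw [this]
    calc (1 / T) * ‖∫ t in (-T)..T, Real.cos (t * (p.1 - p.2))‖
        ≤ (1 / T) * (1 * |T - (-T)|) := by
          apply mul_le_mul_of_nonneg_left hb (by positivity)
      _ = 2 := by
          rw [abs_of_pos (by linarith : (0:ℝ) < T - (-T))]
          field_simp; ring
  · exact integrable_const 2
  · -- a.e. pointwise limit
    have hae : ∀ᵐ p ∂ν, p.1 ≠ p.2 := by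
      rw [ae_iff]
      simpa using diag_null μ
    filter_upwards [hae] with p hp
    set s := p.1 - p.2 with hs
    have hs0 : s ≠ 0 := sub_ne_zero.mpr hp
    apply squeeze_zero_norm' (a := fun T : ℝ => (1 / T) * (2 / |s|))
    · filter_upwards [eventually_gt_atTop (0 : ℝ)] with T hT
      simp only [hG, ← hs]
      rw [cosint hs0 T, norm_mul, Real.norm_eq_abs (1 / T), abs_of_pos (by positivity)]
      apply mul_le_mul_of_nonneg_left _ (by positivity)
      have hnum : |Real.sin (T * s) - Real.sin (-T * s)| ≤ 2 := by
        calc |Real.sin (T * s) - Real.sin (-T * s)|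
            ≤ |Real.sin (T * s)| + |Real.sin (-T * s)| := abs_sub _ _
          _ ≤ 1 + 1 := add_le_add (Real.abs_sin_le_one _) (Real.abs_sin_le_one _)
          _ = 2 := by norm_num
      calc ‖(Real.sin (T * s) - Real.sin (-T * s)) / s‖
          = |Real.sin (T * s) - Real.sin (-T * s)| / |s| := by
            rw [Real.norm_eq_abs, abs_div]
        _ ≤ 2 / |s| := by gcongr
    · have := (tendsto_inv_atTop_zero).mul_const (2 / |s|)
      simpa [one_div] using this
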